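/- Let (n_1,…,n_k) and (n'_1,…,n'_{k'}) be null sequences, each having exactly one entry equal to 1, located at position i in the first sequence and at position i' in the second. If the list obtained from (n_1,…,n_k) by replacing its entry 1 with 2 equals the list obtained from (n'_1,…,n'_{k'}) by replacing its entry 1 with 2, then k = k', i = i', and (n_1,…,n_k) = (n'_1,…,n'_{k'}). -/

import Mathlib

/-- `l'` is a strict blowup of `l`: either an interior blowup
`(n₁,…,n_{s−1}, n_s+1, 1, n_{s+1}+1, n_{s+2},…,n_k)` for some `1 ≤ s ≤ k−1`,
or the end blowup `(n₁,…,n_{k−1}, n_k+1, 1)`. -/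
def IsStrictBlowup (l l' : List ℤ) : Prop :=
  (∃ (A B : List ℤ) (a b : ℤ), l = A ++ a :: b :: B ∧
      l' = A ++ (a + 1) :: 1 :: (b + 1) :: B) ∨
  (∃ (A : List ℤ) (a : ℤ), l = A ++ [a] ∧ l' = A ++ [a + 1, 1])

/-- A null sequence is a finite integer sequence obtained from the one-term
sequence `(0)` by finitely many strict blowups. -/
def IsNullSeq (l : List ℤ) : Prop :=
  Relation.ReflTransGen IsStrictBlowup [0] l


/-- one step of the continuant recursion -/
def fstep (v : ℤ × ℤ) (n : ℤ) : ℤ × ℤ := (v.2, n * v.2 - v.1)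

lemma fstep_add (v w : ℤ × ℤ) (n : ℤ) : fstep (v + w) n = fstep v n + fstep w n := by
  simp [fstep, Prod.ext_iff]; ring

lemma foldl_fstep_add (l : List ℤ) : ∀ v w : ℤ × ℤ,
    l.foldl fstep (v + w) = l.foldl fstep v + l.foldl fstep w := by
  induction l with
  | nil => intro v w; rfl
  | cons n l ih => intro v w; simp only [List.foldl_cons, fstep_add, ih]

lemma fstep_smul (c : ℤ) (v : ℤ × ℤ) (n : ℤ) : fstep (c • v) n = c • fstep v n := by
  simp [fstep, Prod.ext_iff, smul_eq_mul]; ring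

lemma foldl_fstep_smul (l : List ℤ) : ∀ (c : ℤ) (v : ℤ × ℤ),
    l.foldl fstep (c • v) = c • l.foldl fstep v := by
  induction l with
  | nil => intro c v; rfl
  | cons n l ih => intro c v; simp only [List.foldl_cons, fstep_smul, ih]

lemma foldl_fstep_inj (l : List ℤ) : ∀ v w : ℤ × ℤ,
    l.foldl fstep v = l.foldl fstep w → v = w := by
  induction l with
  | nil => intro v w h; exact h
  | cons n l ih =>
    intro v w h
    have h2 := ih _ _ h
    have h3 : v.2 = w.2 := congrArg Prod.fst h2
    have h4 : n * v.2 - v.1 = n * w.2 - w.1 := congrArg Prod.snd h2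
    have : v.1 = w.1 := by rw [h3] at h4; linarith
    exact Prod.ext this h3

/-- Invariant of null sequences: the continuant pair is (1,0), and all proper
prefix continuants are positive. -/
lemma null_good {l : List ℤ} (hl : IsNullSeq l) :
    l.foldl fstep (0, 1) = (1, 0) ∧
      ∀ C E : List ℤ, l = C ++ E → E ≠ [] → 1 ≤ (C.foldl fstep ((0:ℤ), (1:ℤ))).2 := by
  induction hl with
  | refl =>
    constructor
    · simp [fstep]
    · rintro C E h hE
      cases C with
      | nil => simp
      | cons x xs =>
        exfalso
        simp only [List.cons_append, List.cons.injEq] at h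
        exact hE (List.append_eq_nil_iff.mp h.2.symm).2
  | @tail m m' _ hstep ih =>
    rcases hstep with ⟨A, B, a, b, hm, hm'⟩ | ⟨A, a, hm, hm'⟩
    · -- interior blowup
      subst hm hm'
      have key : ∀ v : ℤ × ℤ, fstep (fstep (fstep v (a+1)) 1) (b+1) = fstep (fstep v a) b := by
        intro v; simp only [fstep, Prod.mk.injEq]; constructor <;> ring
      constructor
      · have h1 := ih.1
        simp only [List.foldl_append, List.foldl_cons] at h1 ⊢
        rw [key]; exact h1
      · rintro C E hCE hE
        rw [List.append_eq_append_iff] at hCE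
        rcases hCE with ⟨c', hC, hT⟩ | ⟨a', hA, hEa⟩
        · subst hC
          rcases c' with _ | ⟨x, _ | ⟨y, _ | ⟨z, c4⟩⟩⟩
          · simpa using ih.2 A (a :: b :: B) rfl (by simp)
          · simp only [List.cons_append, List.nil_append, List.cons.injEq] at hT
            obtain ⟨rfl, hT⟩ := hT
            have h1 := ih.2 A (a :: b :: B) rfl (by simp)
            have h2 := ih.2 (A ++ [a]) (b :: B) (by simp) (by simp)
            simp only [List.foldl_append, List.foldl_cons, List.foldl_nil, fstep] at h1 h2 ⊢
            linarith
          · simp only [List.cons_append, List.nil_append, List.cons.injEq] at hT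
            obtain ⟨rfl, rfl, hT⟩ := hT
            have h2 := ih.2 (A ++ [a]) (b :: B) (by simp) (by simp)
            simp only [List.foldl_append, List.foldl_cons, List.foldl_nil, fstep] at h2 ⊢
            linarith
          · simp only [List.cons_append, List.cons.injEq] at hT
            obtain ⟨rfl, rfl, rfl, hB⟩ := hT
            have h2 := ih.2 (A ++ a :: b :: c4) E (by rw [hB]; simp) hE
            simp only [List.foldl_append, List.foldl_cons, List.foldl_nil] at h2 ⊢
            rw [key]; exact h2
        · exact ih.2 C (a' ++ a :: b :: B) (by rw [hA]; simp) (by simp)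
    · -- end blowup
      subst hm hm'
      have h1 := ih.1
      simp only [List.foldl_append, List.foldl_cons, List.foldl_nil] at h1
      have hy : (A.foldl fstep ((0:ℤ),(1:ℤ))).2 = 1 := by
        have := congrArg Prod.fst h1; simpa [fstep] using this
      have hx : a * (A.foldl fstep ((0:ℤ),(1:ℤ))).2 - (A.foldl fstep ((0:ℤ),(1:ℤ))).1 = 0 := by
        have := congrArg Prod.snd h1; simpa [fstep] using this
      constructor
      · simp only [List.foldl_append, List.foldl_cons, List.foldl_nil, fstep, Prod.mk.injEq]
        constructor <;> nlinarith [hy, hx]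
      · rintro C E hCE hE
        rw [List.append_eq_append_iff] at hCE
        rcases hCE with ⟨c', hC, hT⟩ | ⟨a', hA, hEa⟩
        · subst hC
          rcases c' with _ | ⟨x, _ | ⟨y, c4⟩⟩
          · simpa using ih.2 A [a] rfl (by simp)
          · simp only [List.cons_append, List.nil_append, List.cons.injEq] at hT
            obtain ⟨rfl, hT⟩ := hT
            simp only [List.foldl_append, List.foldl_cons, List.foldl_nil, fstep]
            linarith
          · exfalso
            simp only [List.cons_append, List.cons.injEq] at hT
            obtain ⟨-, -, hT⟩ := hT
            simp only [List.nil_eq, List.append_eq_nil_iff] at hT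
            exact hE hT.2
        · exact ih.2 C (a' ++ [a]) (by rw [hA]; simp) (by simp)

/-- Entries of null sequences of length ≥ 2 are at least 1. -/
lemma null_pos {l : List ℤ} (hl : IsNullSeq l) : l = [0] ∨ ∀ x ∈ l, 1 ≤ x := by
  induction hl with
  | refl => exact Or.inl rfl
  | @tail m m' _ hstep ih =>
    right
    rcases hstep with ⟨A, B, a, b, hm, hm'⟩ | ⟨A, a, hm, hm'⟩
    · rcases ih with h0 | h1
      · exfalso; rw [h0] at hm
        have := congrArg List.length hm; simp at this; omega
      · subst hm'
        intro x hx
        simp only [List.mem_append, List.mem_cons] at hx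
        have ha : (1:ℤ) ≤ a := h1 a (by rw [hm]; simp)
        have hb : (1:ℤ) ≤ b := h1 b (by rw [hm]; simp)
        rcases hx with h | h | h | h | h
        · exact h1 x (by rw [hm]; simp [h])
        · omega
        · omega
        · omega
        · exact h1 x (by rw [hm]; simp [h])
    · rcases ih with h0 | h1
      · rw [h0] at hm
        have hA : A = [] ∧ a = 0 := by
          cases A with
          | nil => simpa using hm.symm
          | cons p q => exfalso; have := congrArg List.length hm; simp at this
        subst hm'; rw [hA.1, hA.2]; intro x hx; simp at hx; omega
      · subst hm'
        intro x hx
        have ha : (1:ℤ) ≤ a := h1 a (by rw [hm]; simp)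
        simp only [List.mem_append, List.mem_cons] at hx
        rcases hx with h | h | h | h
        · exact h1 x (by rw [hm]; simp [h])
        · omega
        · omega
        · simp at h

lemma pos2 (D : List ℤ) (hD : ∀ x ∈ D, (2:ℤ) ≤ x) : ∀ a b : ℤ, 0 ≤ a → a ≤ b → 1 ≤ b →
    0 ≤ (D.foldl fstep (a, b)).1 ∧ (D.foldl fstep (a, b)).1 ≤ (D.foldl fstep (a, b)).2 ∧
      1 ≤ (D.foldl fstep (a, b)).2 := by
  induction D with
  | nil => intro a b h1 h2 h3; exact ⟨h1, h2, h3⟩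
  | cons n D ih =>
    intro a b h1 h2 h3
    have hn : (2:ℤ) ≤ n := hD n (by simp)
    have hD' : ∀ x ∈ D, (2:ℤ) ≤ x := fun x hx => hD x (by simp [hx])
    have := ih hD' b (n * b - a) (by linarith) (by nlinarith) (by nlinarith)
    simpa [fstep] using this

lemma key_lemma (l l' : List ℤ) (hl : IsNullSeq l) (hl' : IsNullSeq l')
    (hc : l.count 1 = 1) (i i' : ℕ) (hii : i < i')
    (hil : i < l.length) (hil' : i' < l'.length)
    (hgi : l[i] = 1) (hgi' : l'[i'] = 1)
    (heq : l.set i 2 = l'.set i' 2) : False := by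
  set m := l.set i 2 with hm
  have hlen : m.length = l.length := by simp [hm]
  have hlen' : m.length = l'.length := by rw [heq]; simp
  have hil2 : i < m.length := by omega
  have hil'2 : i' < m.length := by omega
  have hmi : m[i] = 2 := by simp [hm]
  have hmi' : m[i']'hil'2 = 2 := by
    have : m[i']'hil'2 = (l'.set i' 2)[i']'(by rw [← heq]; exact hil'2) := by
      congr 1
    rw [this]; simp
  -- l = m.set i 1
  have hlm : l = m.set i 1 := by
    rw [hm, List.set_set]
    apply List.ext_getElem (by simp)
    intro j hj1 hj2
    rw [List.getElem_set]
    split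
    · next h => exact h ▸ hgi
    · rfl
  have hl'm : l' = m.set i' 1 := by
    rw [heq, List.set_set]
    apply List.ext_getElem (by simp)
    intro j hj1 hj2
    rw [List.getElem_set]
    split
    · next h => exact h ▸ hgi'
    · rfl
  set C := m.take i with hC
  set D := (m.drop (i+1)).take (i' - i - 1) with hD
  set E := m.drop (i'+1) with hE
  have hdropi : m.drop (i+1) = D ++ 2 :: E := by
    conv_lhs => rw [← List.take_append_drop (i' - i - 1) (m.drop (i+1))]
    rw [List.drop_drop]
    have : i + 1 + (i' - i - 1) = i' := by omega
    rw [this, List.drop_eq_getElem_cons hil'2, hmi']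
  have htakei' : m.take i' = C ++ 2 :: D := by
    have h1 : i' = (i + 1) + (i' - i - 1) := by omega
    rw [h1, List.take_add]
    have h2 : m.take (i+1) = C ++ [2] := by
      rw [← List.take_concat_get hil2, hmi]; simp [hC]
    rw [h2]; simp [hD]
  have hL : l = C ++ 1 :: (D ++ 2 :: E) := by
    rw [hlm, List.set_eq_take_append_cons_drop, if_pos hil2, ← hC, hdropi]
  have hL' : l' = C ++ 2 :: (D ++ 1 :: E) := by
    rw [hl'm, List.set_eq_take_append_cons_drop, if_pos hil'2, htakei', ← hE]
    simp
  -- D entries are ≥ 2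
  have hone : (1:ℤ) ∈ l := by rw [hL]; simp
  have hpos : ∀ x ∈ l, (1:ℤ) ≤ x := by
    rcases null_pos hl with h0 | h1
    · rw [h0] at hone; simp at hone
    · exact h1
  have hcD : l.count 1 = l.count 1 := rfl
  have hD1 : (1:ℤ) ∉ D := by
    intro hx
    rw [hL] at hc
    simp only [List.count_append, List.count_cons] at hc
    have : 1 ≤ D.count 1 := List.one_le_count_iff.mpr hx
    simp at hc
    omega
  have hD2 : ∀ x ∈ D, (2:ℤ) ≤ x := by
    intro x hx
    have h1 : (1:ℤ) ≤ x := hpos x (by rw [hL]; simp [hx])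
    have h2 : x ≠ 1 := fun h => hD1 (h ▸ hx)
    omega
  -- the continuant argument
  obtain ⟨hF, hP⟩ := null_good hl
  obtain ⟨hF', -⟩ := null_good hl'
  set w := C.foldl fstep ((0:ℤ), (1:ℤ)) with hw
  have hb0 : 1 ≤ w.2 := hP C (1 :: (D ++ 2 :: E)) hL (by simp)
  rw [hL] at hF
  rw [hL'] at hF'
  simp only [List.foldl_append, List.foldl_cons] at hF hF'
  have hinj : fstep (D.foldl fstep (fstep w 1)) 2 = fstep (D.foldl fstep (fstep w 2)) 1 :=
    foldl_fstep_inj E _ _ (by rw [hF, hF'])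
  have hsplit : fstep w 2 = fstep w 1 + ((0:ℤ), w.2) := by
    simp [fstep, Prod.ext_iff]; ring
  have hlin : D.foldl fstep (fstep w 2) =
      D.foldl fstep (fstep w 1) + w.2 • D.foldl fstep ((0:ℤ), (1:ℤ)) := by
    rw [hsplit, foldl_fstep_add]
    congr 1
    have : ((0:ℤ), w.2) = w.2 • ((0:ℤ), (1:ℤ)) := by simp [Prod.ext_iff]
    rw [this, foldl_fstep_smul]
  have hβ : 1 ≤ (D.foldl fstep ((0:ℤ), (1:ℤ))).2 :=
    (pos2 D hD2 0 1 le_rfl zero_le_one le_rfl).2.2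
  have hfst := congrArg Prod.fst hinj
  rw [hlin] at hfst
  simp [fstep] at hfst
  rcases hfst with h | h <;> linarith

theorem stmt8 (l l' : List ℤ) (hl : IsNullSeq l) (hl' : IsNullSeq l')
    (hc : l.count 1 = 1) (hc' : l'.count 1 = 1)
    (i i' : ℕ) (hil : i < l.length) (hil' : i' < l'.length)
    (hi : l.getD i 0 = 1) (hi' : l'.getD i' 0 = 1)
    (heq : l.set i 2 = l'.set i' 2) :
    l.length = l'.length ∧ i = i' ∧ l = l' := by
  have hgi : l[i] = 1 := by rwa [List.getD_eq_getElem l 0 hil] at hi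
  have hgi' : l'[i'] = 1 := by rwa [List.getD_eq_getElem l' 0 hil'] at hi'
  have hlen : l.length = l'.length := by
    have := congrArg List.length heq; simpa using this
  refine ⟨hlen, ?_⟩
  rcases lt_trichotomy i i' with h | h | h
  · exact absurd (key_lemma l l' hl hl' hc i i' h hil hil' hgi hgi' heq) (fun x => x)
  · subst h
    refine ⟨rfl, ?_⟩
    have : (l.set i 2).set i 1 = (l'.set i 2).set i 1 := by rw [heq]
    rw [List.set_set, List.set_set] at this
    have e1 : l.set i 1 = l := by
      apply List.ext_getElem (by simp)
      intro j hj1 hj2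
      rw [List.getElem_set]
      split
      · next hh => subst hh; exact hgi.symm
      · rfl
    have e2 : l'.set i 1 = l' := by
      apply List.ext_getElem (by simp)
      intro j hj1 hj2
      rw [List.getElem_set]
      split
      · next hh => subst hh; exact hgi'.symm
      · rfl
    rw [e1, e2] at this; exact this
  · exact absurd (key_lemma l' l hl' hl hc' i' i h hil' hil hgi' hgi heq.symm) (fun x => x)
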